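/- arXiv:2304.03345 — 2 statements merged into one kernel-verified Lean document; each statement's English description precedes it below -/
import Mathlib

section
/- For every commutative ring R and all elements x, y ∈ R, one has the matrix identities ρ_v(x,y) = σ1(x)·σ2(y), ρ_e(x,y) = σ2(y)·σ0, ρ_f(x,y) = σ0·σ1(x), and consequently ρ_v(x,y)·ρ_e(x,y)·ρ_f(x,y) = 1 and ρ_e(x,y)² = 1 (so the universal rotation matrices define a representation of the oriented cartographic group C₂⁺ = ⟨ρ_v, ρ_e, ρ_f | ρ_v ρ_e ρ_f = ρ_e² = 1⟩ over R). -/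
open Matrix

/-- Grothendieck's universal formula for the fundamental reflection `σ₀`. -/
def sigma0 (R : Type*) [CommRing R] : Matrix (Fin 3) (Fin 3) R :=
  !![-1, 0, 0; 2, 1, 0; 0, 0, 1]

/-- Grothendieck's universal formula for the fundamental reflection `σ₁`, where `x = cos θ`. -/
def sigma1 {R : Type*} [CommRing R] (x : R) : Matrix (Fin 3) (Fin 3) R :=
  !![1, 1 - x, 0; 0, -1, 0; 0, 1 + x, 1]

/-- Grothendieck's universal formula for the fundamental reflection `σ₂`, where `y = cos γ`. -/
def sigma2 {R : Type*} [CommRing R] (y : R) : Matrix (Fin 3) (Fin 3) R :=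
  !![1, 0, 0; 0, 1, 1 - y; 0, 0, -1]

/-- The universal rotation `ρ_v` about a vertex. -/
def rhoV {R : Type*} [CommRing R] (x y : R) : Matrix (Fin 3) (Fin 3) R :=
  !![1, 1 - x, (1 - x) * (1 - y); 0, -1, -1 + y; 0, 1 + x, -1 + (1 + x) * (1 - y)]

/-- The universal rotation `ρ_e` about an edge. -/
def rhoE {R : Type*} [CommRing R] (y : R) : Matrix (Fin 3) (Fin 3) R :=
  !![-1, 0, 0; 2, 1, 1 - y; 0, 0, -1]

/-- The universal rotation `ρ_f` about a face. -/
def rhoF {R : Type*} [CommRing R] (x : R) : Matrix (Fin 3) (Fin 3) R :=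
  !![-1, -1 + x, 0; 2, 1 - 2 * x, 0; 0, 1 + x, 1]

/-- The universal rotation matrices are the pairwise products of the reflections and satisfy
the defining relations of the oriented cartographic group
`C₂⁺ = ⟨ρ_v, ρ_e, ρ_f | ρ_v ρ_e ρ_f = ρ_e² = 1⟩` over any commutative ring. -/
theorem oriented_cartographic_relations (R : Type*) [CommRing R] (x y : R) :
    rhoV x y = sigma1 x * sigma2 y ∧
    rhoE y = sigma2 y * sigma0 R ∧
    rhoF x = sigma0 R * sigma1 x ∧
    rhoV x y * rhoE y * rhoF x = 1 ∧
    rhoE (R := R) y ^ 2 = 1 := by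
  refine ⟨?_, ?_, ?_, ?_, ?_⟩ <;>
    simp [rhoV, rhoE, rhoF, sigma0, sigma1, sigma2, pow_two, Matrix.mul_fin_three,
      ← Matrix.eta_fin_three (1 : Matrix (Fin 3) (Fin 3) R)] <;>
    ring_nf <;> simp [Matrix.one_fin_three]
end

section
/- Let n ≥ 1 be a natural number and let R and U be the 3×3 integer matrices with rows (−2,−2,−2), (2,2,2), (0,0,0) and (0,0,0), (−2,−2,−2), (2,2,2) respectively. For natural numbers a and b, the image of (1 + R)^a · (1 + U)^b under the reduction map to 3×3 matrices over ZMod n equals the identity matrix if and only if n divides 2a and n divides 2b. In particular, when n is even this holds iff n/2 divides a and n/2 divides b, and when n is odd iff n divides a and n divides b. -/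
open Matrix

/-- The translation part of the unit rightward shift of the square grid. -/
def gridR : Matrix (Fin 3) (Fin 3) ℤ :=
  !![-2, -2, -2; 2, 2, 2; 0, 0, 0]

/-- The translation part of the unit upward shift of the square grid. -/
def gridU : Matrix (Fin 3) (Fin 3) ℤ :=
  !![0, 0, 0; -2, -2, -2; 2, 2, 2]

lemma grid_pow_aux (M : Matrix (Fin 3) (Fin 3) ℤ) (h : M * M = 0) (k : ℕ) :
    (1 + M) ^ k = 1 + (k : ℤ) • M := by
  induction k with
  | zero => simp
  | succ m ih =>
      rw [pow_succ, ih, add_mul, mul_add, mul_add, one_mul, mul_one, smul_mul_assoc, h,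
        smul_zero, add_zero]
      push_cast
      rw [add_smul, one_smul]
      rw [one_mul]; abel

lemma gridR_sq : gridR * gridR = 0 := by
  ext i j; fin_cases i <;> fin_cases j <;>
    simp [gridR, Matrix.mul_apply, Fin.sum_univ_three]

lemma gridU_sq : gridU * gridU = 0 := by
  ext i j; fin_cases i <;> fin_cases j <;>
    simp [gridU, Matrix.mul_apply, Fin.sum_univ_three]

lemma gridRU : gridR * gridU = 0 := by
  ext i j; fin_cases i <;> fin_cases j <;>
    simp [gridR, gridU, Matrix.mul_apply, Fin.sum_univ_three]

lemma grid_prod (a b : ℕ) :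
    (1 + gridR) ^ a * (1 + gridU) ^ b = 1 + ((a : ℤ) • gridR + (b : ℤ) • gridU) := by
  rw [grid_pow_aux _ gridR_sq, grid_pow_aux _ gridU_sq]
  have h0 : gridR * ((b : ℤ) • gridU) = 0 := by rw [mul_smul_comm, gridRU, smul_zero]
  rw [add_mul, mul_add, mul_add, one_mul, mul_one, smul_mul_assoc, h0, smul_zero, add_zero,
    one_mul]
  abel


/-- Reducing the square-grid polyhedron modulo `n`: the translation
`(1 + R)^a (1 + U)^b` becomes trivial over `ZMod n` exactly when `n ∣ 2a` and `n ∣ 2b`;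
for even `n` this means `n/2 ∣ a` and `n/2 ∣ b`, for odd `n` it means `n ∣ a` and `n ∣ b`. -/
theorem grid_translation_trivial_iff (n : ℕ) (hn : 1 ≤ n) (a b : ℕ) :
    (((1 + gridR) ^ a * (1 + gridU) ^ b).map (Int.cast : ℤ → ZMod n) = 1 ↔
      n ∣ 2 * a ∧ n ∣ 2 * b) ∧
    (Even n →
      (((1 + gridR) ^ a * (1 + gridU) ^ b).map (Int.cast : ℤ → ZMod n) = 1 ↔
        n / 2 ∣ a ∧ n / 2 ∣ b)) ∧
    (Odd n →
      (((1 + gridR) ^ a * (1 + gridU) ^ b).map (Int.cast : ℤ → ZMod n) = 1 ↔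
        n ∣ a ∧ n ∣ b)) := by
  have key : ((1 + gridR) ^ a * (1 + gridU) ^ b).map (Int.cast : ℤ → ZMod n) = 1 ↔
      n ∣ 2 * a ∧ n ∣ 2 * b := by
    rw [grid_prod]
    rw [← Matrix.ext_iff]
    have hdvd : ∀ x : ℤ, ((x : ZMod n) = 0) ↔ (n : ℤ) ∣ x := fun x =>
      ZMod.intCast_zmod_eq_zero_iff_dvd x n
    constructor
    · intro h
      have h0 := h 0 0
      have h2 := h 2 2
      simp [gridR, gridU, Matrix.map_apply] at h0 h2
      constructor
      · have : (((2 * a : ℕ) : ℤ) : ZMod n) = 0 := by push_cast; linear_combination h0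
        exact_mod_cast Int.natCast_dvd_natCast.mp ((hdvd _).mp this)
      · have : (((2 * b : ℕ) : ℤ) : ZMod n) = 0 := by push_cast; linear_combination h2
        exact_mod_cast Int.natCast_dvd_natCast.mp ((hdvd _).mp this)
    · rintro ⟨ha, hb⟩
      have ha' : ((2 * a : ℤ) : ZMod n) = 0 := by
        rw [hdvd]; exact_mod_cast Int.natCast_dvd_natCast.mpr ha
      have hb' : ((2 * b : ℤ) : ZMod n) = 0 := by
        rw [hdvd]; exact_mod_cast Int.natCast_dvd_natCast.mpr hb
      push_cast at ha' hb'
      intro i j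
      fin_cases i <;> fin_cases j <;>
        simp [gridR, gridU, Matrix.map_apply, Matrix.one_apply] <;>
        push_cast <;> first
        | linear_combination ha'
        | linear_combination hb'
        | linear_combination ha' - hb'
        | linear_combination hb' - ha'
  refine ⟨key, ?_, ?_⟩
  · rintro ⟨m, hm⟩
    have hn2 : n = 2 * m := by omega
    have hm2 : n / 2 = m := by omega
    rw [key, hm2, hn2, Nat.mul_dvd_mul_iff_left (by norm_num : 0 < 2),
      Nat.mul_dvd_mul_iff_left (by norm_num : 0 < 2)]
  · intro hodd
    have hcop : Nat.Coprime n 2 := hodd.coprime_two_right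
    rw [key]
    constructor
    · rintro ⟨ha, hb⟩
      exact ⟨hcop.dvd_of_dvd_mul_left ha, hcop.dvd_of_dvd_mul_left hb⟩
    · rintro ⟨ha, hb⟩
      exact ⟨Dvd.dvd.mul_left ha 2, Dvd.dvd.mul_left hb 2⟩
end
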